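/- Let G be the graph obtained from K_{k+2} on vertices {r,1,...,k+1} by adding t0 adjacent to 1,...,k+1 and vertices t_i adjacent to t0 and i for 1 ≤ i ≤ k+1. Let T be a spanning tree of G such that dist_T(r,v) = dist_G(r,v) for every vertex v at distance at most 2 from r. Then for every i with 1 ≤ i ≤ k+1, if the edge {t0,i} is not an edge of T, then dist_T(t0, t_i) = 4, while dist_G(t0,t_i) = 1. -/

import Mathlib

open SimpleGraph

inductive GVtx (k : ℕ) : Type
  | r : GVtx k
  | base : Fin (k + 1) → GVtx k
  | t0 : GVtx k
  | t : Fin (k + 1) → GVtx k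

/-- K_{k+2} on {r, 1, ..., k+1}, plus t0 adjacent to 1,...,k+1,
plus t_i adjacent to t0 and i. -/
def gadgetRel (k : ℕ) : GVtx k → GVtx k → Prop
  | .r, .base _ => True
  | .base _, .base _ => True
  | .t0, .base _ => True
  | .t i, .base j => i = j
  | .t _, .t0 => True
  | _, _ => False

def gadgetG (k : ℕ) : SimpleGraph (GVtx k) := SimpleGraph.fromRel (gadgetRel k)

namespace GadgetAux

variable {k : ℕ}

lemma adj_r_base (j : Fin (k + 1)) : (gadgetG k).Adj .r (.base j) := by
  simp [gadgetG, SimpleGraph.fromRel_adj, gadgetRel]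

lemma adj_t0_base (j : Fin (k + 1)) : (gadgetG k).Adj .t0 (.base j) := by
  simp [gadgetG, SimpleGraph.fromRel_adj, gadgetRel]

lemma adj_base_t (j : Fin (k + 1)) : (gadgetG k).Adj (.base j) (.t j) := by
  simp [gadgetG, SimpleGraph.fromRel_adj, gadgetRel]

lemma adj_t0_t (j : Fin (k + 1)) : (gadgetG k).Adj .t0 (.t j) := by
  simp [gadgetG, SimpleGraph.fromRel_adj, gadgetRel]

/-- the G-neighbors of `t i` are `base i` and `t0`. -/
lemma nbr_t {i : Fin (k + 1)} {x : GVtx k} (h : (gadgetG k).Adj x (.t i)) :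
    x = .base i ∨ x = .t0 := by
  cases x <;> simp_all [gadgetG, SimpleGraph.fromRel_adj, gadgetRel]

/-- the G-neighbors of `r` are the `base j`. -/
lemma nbr_r {x : GVtx k} (h : (gadgetG k).Adj .r x) :
    ∃ j, x = .base j := by
  cases x <;> simp_all [gadgetG, SimpleGraph.fromRel_adj, gadgetRel]

/-- the G-neighbors of `t0` are the `base j` and the `t m`. -/
lemma nbr_t0 {x : GVtx k} (h : (gadgetG k).Adj .t0 x) :
    (∃ j, x = .base j) ∨ (∃ m, x = .t m) := by
  cases x <;> simp_all [gadgetG, SimpleGraph.fromRel_adj, gadgetRel]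

/-- classification of G-neighbors of `base i`. -/
lemma nbr_base {i : Fin (k + 1)} {x : GVtx k} (h : (gadgetG k).Adj x (.base i)) :
    x = .r ∨ (∃ m, m ≠ i ∧ x = .base m) ∨ x = .t0 ∨ x = .t i := by
  cases x with
  | base m =>
    refine Or.inr (Or.inl ⟨m, ?_, rfl⟩)
    rintro rfl
    exact (gadgetG k).loopless.irrefl _ h
  | t m =>
    have : m = i := by simpa [gadgetG, SimpleGraph.fromRel_adj, gadgetRel] using h
    subst this; tauto
  | r => tauto
  | t0 => tauto

lemma ne_r_t0 : (GVtx.r : GVtx k) ≠ .t0 := by simp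
lemma ne_r_t (j : Fin (k + 1)) : (GVtx.r : GVtx k) ≠ .t j := by simp
lemma not_adj_r_t0 : ¬ (gadgetG k).Adj .r .t0 := by
  simp [gadgetG, SimpleGraph.fromRel_adj, gadgetRel]
lemma not_adj_r_t (j : Fin (k + 1)) : ¬ (gadgetG k).Adj .r (.t j) := by
  simp [gadgetG, SimpleGraph.fromRel_adj, gadgetRel]

lemma gdist_r_t0 : (gadgetG k).dist .r .t0 = 2 := by
  obtain ⟨w, hw⟩ : ∃ w : (gadgetG k).Walk .r .t0, w.length = 2 :=
    ⟨Walk.cons (adj_r_base 0) (Walk.cons (adj_t0_base 0).symm Walk.nil), rfl⟩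
  have hle : (gadgetG k).dist .r .t0 ≤ 2 := hw ▸ SimpleGraph.dist_le w
  have h0 : (gadgetG k).dist .r .t0 ≠ 0 := fun h => by
    simpa using (SimpleGraph.Reachable.dist_eq_zero_iff w.reachable).mp h
  have h1 : (gadgetG k).dist .r .t0 ≠ 1 := fun h =>
    not_adj_r_t0 (SimpleGraph.dist_eq_one_iff_adj.mp h)
  omega

lemma gdist_r_t (j : Fin (k + 1)) : (gadgetG k).dist .r (.t j) = 2 := by
  obtain ⟨w, hw⟩ : ∃ w : (gadgetG k).Walk .r (.t j), w.length = 2 :=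
    ⟨Walk.cons (adj_r_base j) (Walk.cons (adj_base_t j) Walk.nil), rfl⟩
  have hle : (gadgetG k).dist .r (.t j) ≤ 2 := hw ▸ SimpleGraph.dist_le w
  have h0 : (gadgetG k).dist .r (.t j) ≠ 0 := fun h => by
    simpa using (SimpleGraph.Reachable.dist_eq_zero_iff w.reachable).mp h
  have h1 : (gadgetG k).dist .r (.t j) ≠ 1 := fun h =>
    not_adj_r_t j (SimpleGraph.dist_eq_one_iff_adj.mp h)
  omega

end GadgetAux

open GadgetAux in
/-- For any spanning tree `T` of the gadget preserving the distances from `r`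
to all vertices at distance at most 2 from `r`: if the edge {t0, i} is not in `T`
then dist_T(t0, t_i) = 4, while dist_G(t0, t_i) = 1. -/
theorem stmt2 :
    ∀ k : ℕ, 1 ≤ k →
    ∀ T : SimpleGraph (GVtx k), T ≤ gadgetG k → T.Connected → T.IsAcyclic →
      (∀ v : GVtx k, (gadgetG k).dist .r v ≤ 2 → T.dist .r v = (gadgetG k).dist .r v) →
      ∀ i : Fin (k + 1), ¬ T.Adj .t0 (.base i) →
        T.dist .t0 (.t i) = 4 ∧ (gadgetG k).dist .t0 (.t i) = 1 := by
  intro k hk T hle hconn hacyc hdist i hti0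
  have hpu := SimpleGraph.isAcyclic_iff_path_unique.mp hacyc
  -- T-distance from r to t0 is 2 : extract the middle vertex
  have hd0 : T.dist .r .t0 = 2 := by rw [hdist _ (le_of_eq gdist_r_t0), gdist_r_t0]
  obtain ⟨p0, hp0⟩ := (hconn .r .t0).exists_walk_length_eq_dist
  rw [hd0] at hp0
  obtain ⟨j, hrj, hjt0⟩ : ∃ j : Fin (k+1), T.Adj .r (.base j) ∧ T.Adj (.base j) .t0 := by
    cases p0 with
    | cons h q =>
      cases q with
      | nil => simp at hp0
      | cons h' q' =>
        cases q' with
        | nil =>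
          obtain ⟨j, rfl⟩ := nbr_r (hle h)
          exact ⟨j, h, h'⟩
        | cons h'' q'' => simp at hp0
  -- T-distance from r to t i is 2 : the middle vertex must be base i
  have hdi : T.dist .r (.t i) = 2 := by
    rw [hdist _ (le_of_eq (gdist_r_t i)), gdist_r_t i]
  obtain ⟨pi, hpi⟩ := (hconn .r (.t i)).exists_walk_length_eq_dist
  rw [hdi] at hpi
  obtain ⟨hri, hiti⟩ : T.Adj .r (.base i) ∧ T.Adj (.base i) (.t i) := by
    cases pi with
    | cons h q =>
      cases q with
      | nil => simp at hpi
      | cons h' q' =>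
        cases q' with
        | nil =>
          obtain ⟨m, rfl⟩ := nbr_r (hle h)
          rcases nbr_t (hle h') with he | he
          · rw [he] at h h'
            exact ⟨h, h'⟩
          · exact absurd he (by simp)
        | cons h'' q'' => simp at hpi
  have hji : j ≠ i := by rintro rfl; exact hti0 hjt0.symm
  -- t0 and t i are not adjacent in T
  have hnadj : ¬ T.Adj .t0 (.t i) := by
    intro hadj
    have heq := hpu
      ⟨Walk.cons hrj (Walk.cons hjt0 Walk.nil), by simp [Walk.isPath_def]⟩
      ⟨Walk.cons hri (Walk.cons hiti (Walk.cons hadj.symm Walk.nil)), by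
        simp [Walk.isPath_def]⟩
    have hlen := congrArg (fun p : T.Path .r .t0 => p.1.length) heq
    simp at hlen
  -- no path t0 - base m - base i in T
  have hnmid : ∀ m : Fin (k+1), ¬ (T.Adj .t0 (.base m) ∧ T.Adj (.base m) (.base i)) := by
    rintro m ⟨hm1, hm2⟩
    have hmi : m ≠ i := by
      rintro rfl; exact hti0 hm1
    have heq := hpu
      ⟨Walk.cons hrj (Walk.cons hjt0 Walk.nil), by simp [Walk.isPath_def]⟩
      ⟨Walk.cons hri (Walk.cons hm2.symm (Walk.cons hm1.symm Walk.nil)), by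
        simp [Walk.isPath_def, hmi, Ne.symm hmi]⟩
    have hlen := congrArg (fun p : T.Path .r .t0 => p.1.length) heq
    simp at hlen
  -- every walk from t0 to t i in T has length ≥ 4
  have hwalk : ∀ p : T.Walk .t0 (.t i), 4 ≤ p.length := by
    intro p
    cases p with
    | cons h q =>
      cases q with
      | nil => exact absurd h hnadj
      | cons h' q' =>
        cases q' with
        | nil =>
          -- walk t0, x, t i of length 2
          rcases nbr_t (hle h') with he | he
          · rw [he] at h; exact absurd h hti0
          · rw [he] at h; exact absurd (hle h) ((gadgetG k).loopless.irrefl _)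
        | cons h'' q'' =>
          cases q'' with
          | nil =>
            -- walk t0, x, y, t i of length 3
            rcases nbr_t (hle h'') with he | he
            · subst he
              -- y = base i; classify x
              rcases nbr_t0 (hle h) with ⟨m, rfl⟩ | ⟨m, rfl⟩
              · exact absurd ⟨h, h'⟩ (hnmid m)
              · have : m = i := by
                  have := hle h'
                  simpa [gadgetG, SimpleGraph.fromRel_adj, gadgetRel] using this
                subst this
                exact absurd h hnadj
            · subst he
              exact absurd h'' hnadj
          | cons h''' q''' =>
            simp only [Walk.length_cons]
            omega
  -- conclusion
  constructor
  · obtain ⟨w4, hw4⟩ : ∃ w : T.Walk .t0 (.t i), w.length = 4 :=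
      ⟨Walk.cons hjt0.symm (Walk.cons hrj.symm (Walk.cons hri (Walk.cons hiti Walk.nil))), rfl⟩
    have hle4 : T.dist .t0 (.t i) ≤ 4 :=
      le_trans (SimpleGraph.dist_le w4) (le_of_eq hw4)
    obtain ⟨p, hp⟩ := (hconn .t0 (.t i)).exists_walk_length_eq_dist
    have := hwalk p
    omega
  · rw [SimpleGraph.dist_eq_one_iff_adj]
    exact adj_t0_t i
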